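/- Let X, Y be Banach spaces, D ⊂ X, E ⊂ Y closed sets, f : X → Y continuously Fréchet differentiable, and x̄ ∈ D ∩ f⁻¹(E). Assume the map g : X × Y → Y, g(x,y) = f(x) − y, is metrically subregular at (x̄, f(x̄), 0) with respect to D × E, i.e., there exist s > 0, μ > 0 such that for every (x,y) ∈ [B(x̄,s) × B(f(x̄),s)] ∩ (D × E), d((x,y), g⁻¹(0) ∩ (D × E)) ≤ μ‖f(x) − y‖. Then T_B(D, x̄) ∩ ∇f(x̄)⁻¹(T_U(E, f(x̄))) ⊂ T_B(D ∩ f⁻¹(E), x̄). -/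

import Mathlib

open Filter Topology Pointwise

section Defs

variable {X Y : Type*} [NormedAddCommGroup X] [NormedSpace ℝ X]
  [NormedAddCommGroup Y] [NormedSpace ℝ Y]

/-- A sequence of positive reals tending to zero. -/
def PosToZero (t : ℕ → ℝ) : Prop := (∀ n, 0 < t n) ∧ Tendsto t atTop (𝓝 0)

/-- First order Bouligand tangent cone. -/
def TB (D : Set X) (x : X) : Set X :=
  {u | ∃ t : ℕ → ℝ, PosToZero t ∧ ∃ w : ℕ → X, Tendsto w atTop (𝓝 u) ∧
    ∀ n, x + t n • w n ∈ D}

/-- First order Ursescu tangent cone. -/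
def TU (D : Set X) (x : X) : Set X :=
  {u | ∀ t : ℕ → ℝ, PosToZero t → ∃ w : ℕ → X, Tendsto w atTop (𝓝 u) ∧
    ∀ n, x + t n • w n ∈ D}

/-- Second order Bouligand tangent set. -/
def TB2 (D : Set X) (x x₁ : X) : Set X :=
  {u | ∃ t : ℕ → ℝ, PosToZero t ∧ ∃ w : ℕ → X, Tendsto w atTop (𝓝 u) ∧
    ∀ n, x + t n • x₁ + (t n) ^ 2 • w n ∈ D}

/-- Second order Ursescu tangent set. -/
def TU2 (D : Set X) (x x₁ : X) : Set X :=
  {u | ∀ t : ℕ → ℝ, PosToZero t → ∃ w : ℕ → X, Tendsto w atTop (𝓝 u) ∧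
    ∃ n₀ : ℕ, ∀ n ≥ n₀, x + t n • x₁ + (t n) ^ 2 • w n ∈ D}

/-- Graph of a set-valued map. -/
def SVGraph (F : X → Set Y) : Set (X × Y) := {p | p.2 ∈ F p.1}

/-- First order Bouligand derivative. -/
def DB (F : X → Set Y) (x : X) (y : Y) (u : X) : Set Y :=
  {v | (u, v) ∈ TB (SVGraph F) (x, y)}

/-- First order Ursescu derivative. -/
def DU (F : X → Set Y) (x : X) (y : Y) (u : X) : Set Y :=
  {v | (u, v) ∈ TU (SVGraph F) (x, y)}

/-- Dini lower derivative. -/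
def DD (F : X → Set Y) (x : X) (y : Y) (u : X) : Set Y :=
  {v | ∀ t : ℕ → ℝ, PosToZero t → ∀ w : ℕ → X, Tendsto w atTop (𝓝 u) →
    ∃ v' : ℕ → Y, Tendsto v' atTop (𝓝 v) ∧
      ∃ n₀ : ℕ, ∀ n ≥ n₀, y + t n • v' n ∈ F (x + t n • w n)}

/-- Aubin property of a set-valued map around a point of its graph. -/
def AubinProperty (F : X → Set Y) (x : X) (y : Y) : Prop :=
  ∃ L > (0:ℝ), ∃ r > (0:ℝ), ∀ x' x'' : X, ‖x' - x‖ ≤ r → ‖x'' - x‖ ≤ r →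
    ∀ y' ∈ F x', ‖y' - y‖ ≤ r → ∃ y'' ∈ F x'', ‖y' - y''‖ ≤ L * ‖x' - x''‖

end Defs

theorem tb_inter_subregular {X Y : Type*}
    [NormedAddCommGroup X] [NormedSpace ℝ X] [CompleteSpace X]
    [NormedAddCommGroup Y] [NormedSpace ℝ Y] [CompleteSpace Y]
    (D : Set X) (E : Set Y) (hD : IsClosed D) (hE : IsClosed E)
    (f : X → Y) (hf : ContDiff ℝ 1 f) (xb : X) (hxb : xb ∈ D ∩ f ⁻¹' E)
    (hsub : ∃ s > (0:ℝ), ∃ μ > (0:ℝ), ∀ x ∈ D, ∀ y ∈ E,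
      ‖x - xb‖ < s → ‖y - f xb‖ < s → ∀ ε > (0:ℝ),
        ∃ a ∈ D, ∃ b ∈ E, f a = b ∧ ‖x - a‖ + ‖y - b‖ < μ * ‖f x - y‖ + ε) :
    TB D xb ∩ (fderiv ℝ f xb) ⁻¹' (TU E (f xb)) ⊆ TB (D ∩ f ⁻¹' E) xb := by
  obtain ⟨s, hs, μ, hμ, hsub⟩ := hsub
  rintro u ⟨⟨t, ht, w, hw, hwD⟩, huE⟩
  obtain ⟨v, hv, hvE⟩ := huE t ht
  set A := fderiv ℝ f xb with hA
  have htpos := ht.1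
  have htne : ∀ n, t n ≠ 0 := fun n => (htpos n).ne'
  set x : ℕ → X := fun n => xb + t n • w n with hxdef
  set y : ℕ → Y := fun n => f xb + t n • v n with hydef
  have hx0 : Tendsto x atTop (𝓝 xb) := by
    have h : Tendsto (fun n => t n • w n) atTop (𝓝 ((0:ℝ) • u)) := ht.2.smul hw
    simpa [hxdef] using tendsto_const_nhds.add h
  have hy0 : Tendsto y atTop (𝓝 (f xb)) := by
    have h : Tendsto (fun n => t n • v n) atTop (𝓝 ((0:ℝ) • (A u))) := ht.2.smul hv
    simpa [hydef] using tendsto_const_nhds.add h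
  have hdf : HasFDerivAt f A xb := (hf.differentiable one_ne_zero xb).hasFDerivAt
  have hlo := hdf.isLittleO.comp_tendsto hx0
  have hM : (0:ℝ) < ‖u‖ + 1 := by positivity
  have hα : Tendsto (fun n => (t n)⁻¹ • (f (x n) - f xb - A (x n - xb))) atTop (𝓝 0) := by
    rw [NormedAddCommGroup.tendsto_nhds_zero]
    intro ε hε
    have hc : (0:ℝ) < ε / (2 * (‖u‖ + 1)) := by positivity
    have h1 := hlo.def hc
    have h2 : ∀ᶠ n in atTop, ‖w n‖ ≤ ‖u‖ + 1 := hw.norm.eventually_le_const (lt_add_one _)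
    filter_upwards [h1, h2] with n h1 h2
    have hxx : x n - xb = t n • w n := by simp [hxdef]
    simp only [Function.comp] at h1
    rw [hxx] at h1
    have he1 : ‖(t n)⁻¹ • (f (x n) - f xb - A (x n - xb))‖
        = (t n)⁻¹ * ‖f (x n) - f xb - A (x n - xb)‖ := by
      rw [norm_smul, Real.norm_eq_abs, abs_of_pos (inv_pos.mpr (htpos n))]
    have hn : ‖t n • w n‖ = t n * ‖w n‖ := by
      rw [norm_smul, Real.norm_eq_abs, abs_of_pos (htpos n)]
    rw [he1]
    have htn := htne n
    calc (t n)⁻¹ * ‖f (x n) - f xb - A (x n - xb)‖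
        ≤ (t n)⁻¹ * (ε / (2 * (‖u‖ + 1)) * (t n * ‖w n‖)) := by
          apply mul_le_mul_of_nonneg_left _ (le_of_lt (inv_pos.mpr (htpos n)))
          rw [← hn, hxx]
          exact h1
      _ = ε / (2 * (‖u‖ + 1)) * ‖w n‖ := by field_simp
      _ ≤ ε / (2 * (‖u‖ + 1)) * (‖u‖ + 1) := by
          exact mul_le_mul_of_nonneg_left h2 (le_of_lt hc)
      _ = ε / 2 := by field_simp
      _ < ε := by linarith
  have hβ : Tendsto (fun n => (t n)⁻¹ • (f (x n) - y n)) atTop (𝓝 0) := by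
    have heq : ∀ n, (t n)⁻¹ • (f (x n) - y n)
        = (t n)⁻¹ • (f (x n) - f xb - A (x n - xb)) + (A (w n) - v n) := by
      intro n
      have hxx : x n - xb = t n • w n := by simp [hxdef]
      have hyy : y n = f xb + t n • v n := rfl
      rw [hxx, hyy, map_smul]
      have h1 : (t n)⁻¹ • (t n • (A (w n))) = A (w n) := inv_smul_smul₀ (htne n) _
      have h2 : (t n)⁻¹ • (t n • v n) = v n := inv_smul_smul₀ (htne n) _
      simp only [smul_sub, smul_add, h1, h2]
      abel
    have h3 : Tendsto (fun n => A (w n) - v n) atTop (𝓝 0) := by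
      have h4 : Tendsto (fun n => A (w n)) atTop (𝓝 (A u)) := (A.continuous.tendsto u).comp hw
      simpa using h4.sub hv
    have h5 := hα.add h3
    rw [add_zero] at h5
    exact Tendsto.congr (fun n => (heq n).symm) h5
  have hxs := Metric.tendsto_nhds.mp hx0 s hs
  have hys := Metric.tendsto_nhds.mp hy0 s hs
  obtain ⟨N, hN⟩ := eventually_atTop.mp (hxs.and hys)
  have H : ∀ n : ℕ, ∃ a ∈ D, ∃ b ∈ E, f a = b ∧
      ‖x (n + N) - a‖ + ‖y (n + N) - b‖ < μ * ‖f (x (n + N)) - y (n + N)‖ + (t (n + N))^2 := by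
    intro n
    have h := hN (n + N) (Nat.le_add_left N n)
    exact hsub _ (hwD _) _ (hvE _) (by rw [← dist_eq_norm]; exact h.1)
      (by rw [← dist_eq_norm]; exact h.2) _ (pow_pos (htpos _) 2)
  choose a haD b hbE hfab hbound using H
  refine ⟨fun n => t (n + N), ⟨fun n => htpos _, ht.2.comp (tendsto_add_atTop_nat N)⟩,
    fun n => (t (n + N))⁻¹ • (a n - xb), ?_, ?_⟩
  · have hbnd : ∀ n, ‖(t (n+N))⁻¹ • (a n - x (n+N))‖
        ≤ μ * ‖(t (n+N))⁻¹ • (f (x (n+N)) - y (n+N))‖ + t (n+N) := by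
      intro n
      have htm := htne (n+N)
      have h1 : ‖a n - x (n+N)‖ ≤ μ * ‖f (x (n+N)) - y (n+N)‖ + (t (n+N))^2 := by
        have hb := hbound n
        have h2 : ‖x (n+N) - a n‖ ≤ μ * ‖f (x (n+N)) - y (n+N)‖ + (t (n+N))^2 := by
          linarith [norm_nonneg (y (n+N) - b n)]
        rwa [norm_sub_rev] at h2
      calc ‖(t (n+N))⁻¹ • (a n - x (n+N))‖ = (t (n+N))⁻¹ * ‖a n - x (n+N)‖ := by
            rw [norm_smul, Real.norm_eq_abs, abs_of_pos (inv_pos.mpr (htpos _))]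
        _ ≤ (t (n+N))⁻¹ * (μ * ‖f (x (n+N)) - y (n+N)‖ + (t (n+N))^2) := by
            exact mul_le_mul_of_nonneg_left h1 (le_of_lt (inv_pos.mpr (htpos _)))
        _ = μ * ((t (n+N))⁻¹ * ‖f (x (n+N)) - y (n+N)‖) + t (n+N) := by field_simp
        _ = μ * ‖(t (n+N))⁻¹ • (f (x (n+N)) - y (n+N))‖ + t (n+N) := by
            rw [norm_smul, Real.norm_eq_abs, abs_of_pos (inv_pos.mpr (htpos _))]
    have hlim : Tendsto (fun n => μ * ‖(t (n+N))⁻¹ • (f (x (n+N)) - y (n+N))‖ + t (n+N))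
        atTop (𝓝 0) := by
      have h1 := (hβ.comp (tendsto_add_atTop_nat N)).norm
      have h2 := ht.2.comp (tendsto_add_atTop_nat N)
      have h3 := (tendsto_const_nhds (x := μ)).mul h1
      simpa using h3.add h2
    have hz : Tendsto (fun n => (t (n+N))⁻¹ • (a n - x (n+N))) atTop (𝓝 0) := by
      rw [tendsto_zero_iff_norm_tendsto_zero]
      exact squeeze_zero (fun n => norm_nonneg _) hbnd hlim
    have heq2 : ∀ n, (t (n+N))⁻¹ • (a n - xb) = (t (n+N))⁻¹ • (a n - x (n+N)) + w (n+N) := by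
      intro n
      have h : a n - xb = (a n - x (n+N)) + t (n+N) • w (n+N) := by
        simp only [hxdef]; abel
      rw [h, smul_add, inv_smul_smul₀ (htne _)]
    have h6 := hz.add (hw.comp (tendsto_add_atTop_nat N))
    rw [zero_add] at h6
    exact Tendsto.congr (fun n => (heq2 n).symm) h6
  · intro n
    have h : xb + t (n+N) • ((t (n+N))⁻¹ • (a n - xb)) = a n := by
      rw [smul_inv_smul₀ (htne _)]; abel
    rw [h]
    exact ⟨haD n, show f (a n) ∈ E from (hfab n).symm ▸ hbE n⟩
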